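/- For all t ∈ (0, 1], ln(sinh(t)/t + t^6/810) < (1 + t^4/135) · ln(sinh(t)/t). -/

import Mathlib

open Real

lemma cosh_lb (x : ℝ) : 1 + x ^ 2 / 2 ≤ Real.cosh x := by
  have h : Real.cosh x = Real.cosh (x/2) ^ 2 + Real.sinh (x/2) ^ 2 := by
    rw [← Real.cosh_two_mul]; ring_nf
  have h2 : Real.cosh (x/2) ^ 2 = Real.sinh (x/2) ^ 2 + 1 := Real.cosh_sq _
  have h3 : (x/2) ^ 2 ≤ Real.sinh (x/2) ^ 2 := by
    rcases le_or_gt 0 x with hx | hx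
    · have := Real.self_le_sinh_iff.2 (by linarith : (0:ℝ) ≤ x/2)
      have h0 : 0 ≤ x/2 := by linarith
      nlinarith
    · have := Real.sinh_le_self_iff.2 (by linarith : x/2 ≤ 0)
      have h0 : x/2 ≤ 0 := by linarith
      nlinarith
  nlinarith

lemma sinh_lb {x : ℝ} (hx : 0 ≤ x) : x + x ^ 3 / 6 ≤ Real.sinh x := by
  have key : ∀ y : ℝ, MonotoneOn (fun t => Real.sinh t - t - t ^ 3 / 6) (Set.Icc 0 y) := by
    intro y
    apply monotoneOn_of_deriv_nonneg (convex_Icc 0 y)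
    · exact ((Real.continuous_sinh.sub continuous_id).sub
        (continuous_pow 3 |>.div_const 6)).continuousOn
    · intro z _
      exact (((Real.differentiable_sinh z).sub (differentiable_id z)).sub
        ((differentiable_pow 3 z).div_const 6)).differentiableWithinAt
    · intro z _
      have hd : deriv (fun t => Real.sinh t - t - t ^ 3 / 6) z
          = Real.cosh z - 1 - z ^ 2 / 2 := by
        rw [deriv_fun_sub, deriv_fun_sub]
        · simp [Real.deriv_sinh, deriv_div_const]
          ring
        · exact Real.differentiable_sinh z
        · exact differentiable_id z
        · exact (Real.differentiable_sinh z).sub (differentiable_id z)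
        · exact (differentiable_pow 3 z).div_const 6
      rw [hd]
      have := cosh_lb z
      linarith
  have := key x (Set.left_mem_Icc.2 hx) (Set.right_mem_Icc.2 hx) hx
  simp [Real.sinh_zero] at this
  linarith

theorem W1_lt_Wc1 (t : ℝ) (ht0 : 0 < t) (ht1 : t ≤ 1) :
    Real.log (Real.sinh t / t + t ^ 6 / 810) <
      (1 + t ^ 4 / 135) * Real.log (Real.sinh t / t) := by
  set s := Real.sinh t / t with hs
  have hsl : 1 + t ^ 2 / 6 ≤ s := by
    rw [hs, le_div_iff₀ ht0]
    have := sinh_lb ht0.le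
    nlinarith
  have hs1 : 1 < s := by nlinarith
  have hs0 : 0 < s := by linarith
  have ha : 0 < t ^ 6 / 810 := by positivity
  -- log(s + a) = log s + log(1 + a/s)
  have hsplit : Real.log (s + t ^ 6 / 810) = Real.log s + Real.log (1 + t ^ 6 / 810 / s) := by
    rw [← Real.log_mul (ne_of_gt hs0) (by positivity)]
    congr 1
    field_simp
  rw [hsplit]
  -- log(1 + a/s) < a/s
  have h1 : Real.log (1 + t ^ 6 / 810 / s) < t ^ 6 / 810 / s := by
    have hpos : (0:ℝ) < t ^ 6 / 810 / s := by positivity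
    have := Real.log_lt_sub_one_of_pos (x := 1 + t ^ 6 / 810 / s) (by positivity)
      (by linarith : (1:ℝ) + t ^ 6 / 810 / s ≠ 1)
    linarith
  -- a/s ≤ t^6/(135(6+t^2))
  have h2 : t ^ 6 / 810 / s ≤ t ^ 6 / (135 * (6 + t ^ 2)) := by
    rw [div_div]
    apply div_le_div_of_nonneg_left (by positivity) (by positivity)
    nlinarith
  -- log s ≥ t^2/(6+t^2)
  have h3 : t ^ 2 / (6 + t ^ 2) ≤ Real.log s := by
    have := Real.one_sub_inv_le_log_of_pos hs0
    have hle : 1 + t ^ 2 / 6 ≤ s := hsl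
    have hinv : s⁻¹ ≤ (1 + t ^ 2 / 6)⁻¹ := by
      apply inv_anti₀ (by positivity) hle
    have : 1 - (1 + t ^ 2 / 6)⁻¹ ≤ Real.log s := by
      have := Real.one_sub_inv_le_log_of_pos hs0
      linarith
    have heq : 1 - (1 + t ^ 2 / 6)⁻¹ = t ^ 2 / (6 + t ^ 2) := by
      have hp : (0:ℝ) < 1 + t ^ 2 / 6 := by positivity
      field_simp
      ring
    linarith
  have h4 : t ^ 6 / (135 * (6 + t ^ 2)) ≤ t ^ 4 / 135 * Real.log s := by
    have := mul_le_mul_of_nonneg_left h3 (by positivity : (0:ℝ) ≤ t ^ 4 / 135)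
    calc t ^ 6 / (135 * (6 + t ^ 2)) = t ^ 4 / 135 * (t ^ 2 / (6 + t ^ 2)) := by
          field_simp
      _ ≤ t ^ 4 / 135 * Real.log s := this
  linarith
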